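/- Let τ₀ ∈ ℂ with Im(τ₀) > 0 and q = e^{-2πiτ₀ε}, ε > 0. Then for every integer m ≥ 1: |(q^m - 1)/(q - 1)| ≥ m · Im(τ₀)/|τ₀|. -/

import Mathlib

open intervalIntegral

lemma exp_sub_one_abs_le (a : ℂ) (ha : 0 < a.re) :
    ‖Complex.exp a - 1‖ ≤ ‖a‖ / a.re * (Real.exp a.re - 1) := by
  have hderiv : ∀ t ∈ Set.uIcc (0:ℝ) 1,
      HasDerivAt (fun t : ℝ => Complex.exp ((t : ℂ) * a)) (a * Complex.exp ((t : ℂ) * a)) t := by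
    intro t _
    have h1 : HasDerivAt (fun t : ℝ => (t : ℂ) * a) a t := by
      simpa using ((hasDerivAt_id t).ofReal_comp.mul_const a)
    simpa [mul_comm] using h1.cexp
  have hint : Complex.exp a - 1 = ∫ t in (0:ℝ)..1, a * Complex.exp ((t : ℂ) * a) := by
    rw [integral_eq_sub_of_hasDerivAt hderiv]
    · simp
    · exact (Continuous.intervalIntegrable (by continuity) 0 1)
  have hbound : ‖Complex.exp a - 1‖
      ≤ ∫ t in (0:ℝ)..1, ‖a‖ * Real.exp (t * a.re) := by
    rw [hint]
    have := intervalIntegral.norm_integral_le_integral_norm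
      (f := fun t : ℝ => a * Complex.exp ((t : ℂ) * a)) (a := (0:ℝ)) (b := 1) (μ := MeasureTheory.volume) zero_le_one
    simpa [Complex.norm_exp, Complex.mul_re, Complex.ofReal_re, Complex.ofReal_im] using this
  have hval : ∫ t in (0:ℝ)..1, ‖a‖ * Real.exp (t * a.re)
      = ‖a‖ / a.re * (Real.exp a.re - 1) := by
    have hd : ∀ t ∈ Set.uIcc (0:ℝ) 1,
        HasDerivAt (fun t : ℝ => ‖a‖ / a.re * Real.exp (t * a.re))
          (‖a‖ * Real.exp (t * a.re)) t := by
      intro t _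
      have h1 : HasDerivAt (fun t : ℝ => t * a.re) a.re t := by simpa using (hasDerivAt_id t).mul_const a.re
      have h2 := (h1.exp).const_mul (‖a‖ / a.re)
      have : ‖a‖ / a.re * (Real.exp (t * a.re) * a.re)
          = ‖a‖ * Real.exp (t * a.re) := by
        field_simp
      simpa [this] using h2
    rw [integral_eq_sub_of_hasDerivAt hd (Continuous.intervalIntegrable (by continuity) 0 1)]
    simp [mul_sub]
  linarith [hbound, hval.le, hval.ge]



/-- Let `Im(τ₀) > 0`, `ε > 0` and `q = e^{-2πiτ₀ε}`.  Then for every integer `m ≥ 1`,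
`|(q^m - 1)/(q - 1)| ≥ m·Im(τ₀)/|τ₀|`. -/
theorem q_geometric_quotient_lower_bound (τ : ℂ) (hτ : 0 < τ.im) (ε : ℝ) (hε : 0 < ε)
    (m : ℕ) (hm : 1 ≤ m) :
    (m : ℝ) * τ.im / ‖τ‖ ≤
      ‖(Complex.exp (-2 * (Real.pi : ℂ) * Complex.I * τ * (ε : ℂ)) ^ m - 1) /
        (Complex.exp (-2 * (Real.pi : ℂ) * Complex.I * τ * (ε : ℂ)) - 1)‖ := by
  set a : ℂ := -2 * (Real.pi : ℂ) * Complex.I * τ * (ε : ℂ) with ha_def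
  have hpi := Real.pi_pos
  have ha_re : a.re = 2 * Real.pi * ε * τ.im := by
    simp [ha_def, Complex.mul_re, Complex.mul_im]
    ring
  have ha_re_pos : 0 < a.re := by rw [ha_re]; positivity
  have hτ0 : τ ≠ 0 := fun h => by simp [h] at hτ
  have habsτ : 0 < ‖τ‖ := norm_pos_iff.mpr hτ0
  have ha_abs : ‖a‖ = 2 * Real.pi * ε * ‖τ‖ := by
    simp [ha_def, norm_mul, Complex.norm_I, Complex.norm_real, abs_of_pos hε, abs_of_pos hpi]
    ring
  have ha_abs_pos : 0 < ‖a‖ := by rw [ha_abs]; positivity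
  set q : ℂ := Complex.exp a with hq_def
  set r : ℝ := Real.exp a.re with hr_def
  have habsq : ‖q‖ = r := Complex.norm_exp a
  have hr1 : 1 < r := by
    have : Real.exp 0 < Real.exp a.re := Real.exp_lt_exp.mpr ha_re_pos
    rwa [Real.exp_zero] at this
  have hq1 : q - 1 ≠ 0 := by
    intro h
    rw [sub_eq_zero] at h
    rw [h] at habsq
    simp at habsq
    linarith
  have habsq1 : 0 < ‖q - 1‖ := norm_pos_iff.mpr hq1
  -- numerator lower bound
  have hnum : r ^ m - 1 ≤ ‖q ^ m - 1‖ := by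
    have := norm_sub_norm_le (q ^ m) 1
    simpa [habsq] using this
  have hber : (m : ℝ) * (r - 1) ≤ r ^ m - 1 := by
    have := one_add_mul_le_pow (a := r - 1) (by linarith) m
    simp at this
    linarith
  -- denominator upper bound
  have hden : ‖q - 1‖ ≤ ‖a‖ / a.re * (r - 1) := by
    simpa [hr_def] using exp_sub_one_abs_le a ha_re_pos
  have hdenpos : 0 < ‖a‖ / a.re * (r - 1) := by
    apply mul_pos (div_pos ha_abs_pos ha_re_pos); linarith
  rw [norm_div]
  have key : (m : ℝ) * (r - 1) / (‖a‖ / a.re * (r - 1))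
      ≤ ‖q ^ m - 1‖ / ‖q - 1‖ := by
    apply div_le_div₀ (by positivity) (le_trans hber hnum) habsq1 hden
  have hsimp : (m : ℝ) * (r - 1) / (‖a‖ / a.re * (r - 1))
      = (m : ℝ) * a.re / ‖a‖ := by
    rw [mul_div_mul_right _ _ (ne_of_gt (by linarith : (0:ℝ) < r - 1)),
      div_div_eq_mul_div]
  have heq : (m : ℝ) * a.re / ‖a‖ = (m : ℝ) * τ.im / ‖τ‖ := by
    rw [ha_re, ha_abs]
    field_simp
  rw [← heq]
  rw [← hsimp]
  exact key
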